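/- (Corollary 3) Let N ≥ 2 and let A(t) = (a_{ij}(t)), t ≥ 0, be a family of irreducible N×N matrices satisfying Condition A2 whose largest nonzero eigenvalue satisfies λ_2(t) ≤ λ < 0 for all t. Suppose f : ℝ^n × ℝ⁺ → ℝ^n is continuous and belongs to QUAD(Δ,ϖ) with ϖ > 0, and let g_1,…,g_n : ℝ → ℝ satisfy (g_k(u) − g_k(v))/(u − v) ≥ β for all u ≠ v and k = 1,…,n, where β > 0; write g(x) = (g_1(x^1),…,g_n(x^n))^T. Let α > 0 and let x_1,…,x_N : [0,∞) → ℝ^n and c : [0,∞) → ℝ be differentiable functions satisfying, for all t ≥ 0, ẋ_i(t) = f(x_i(t),t) + c(t) Σ_{j≠i} a_{ij}(t) (g(x_j(t)) − g(x_i(t))), ċ(t) = −(α/2) Σ_{i,j} a_{ij}(t) x_i(t)^T g(x_j(t)), and c(0) = 0. Then ‖x_i(t) − x_j(t)‖ → 0 as t → ∞ for all i, j, and c(t) converges to a finite limit. -/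

import Mathlib

open Matrix Filter

section Aux
open Finset

private lemma pairSum' (N : ℕ) (u v : Fin N → ℝ) :
    ∑ i, ∑ j, (u i - u j) * (v i - v j)
      = 2 * N * (∑ i, u i * v i) - 2 * (∑ i, u i) * (∑ i, v i) := by
  have h : ∀ i j : Fin N, (u i - u j) * (v i - v j)
      = u i * v i + u j * v j - (u i * v j + u j * v i) := by intros; ring
  simp_rw [h, Finset.sum_sub_distrib, Finset.sum_add_distrib, Finset.sum_const,
    Finset.card_univ, Fintype.card_fin, ← Finset.sum_mul, ← Finset.mul_sum,
    ← Finset.smul_sum, nsmul_eq_mul]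
  simp only [← Finset.sum_mul]
  ring


private lemma quadId' (N : ℕ) (a : Matrix (Fin N) (Fin N) ℝ)
    (hsym : ∀ i j, a i j = a j i)
    (hrow : ∀ i, ∑ j, a i j = 0)
    (u v : Fin N → ℝ) :
    ∑ i, ∑ j, a i j * ((u i - u j) * (v i - v j))
      = -2 * ∑ i, ∑ j, a i j * (u i * v j) := by
  have hcol : ∀ j, ∑ i, a i j = 0 := by
    intro j
    calc ∑ i, a i j = ∑ i, a j i := by
          exact Finset.sum_congr rfl fun i _ => hsym i j
      _ = 0 := hrow j
  have h : ∀ i j : Fin N, a i j * ((u i - u j) * (v i - v j))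
      = a i j * (u i * v i) + a i j * (u j * v j)
        - (a i j * (u i * v j) + a i j * (u j * v i)) := by intros; ring
  simp_rw [h, Finset.sum_sub_distrib, Finset.sum_add_distrib]
  have h1 : ∑ i, ∑ j, a i j * (u i * v i) = 0 := by
    simp_rw [← Finset.sum_mul]
    simp [hrow]
  have h2 : ∑ i : Fin N, ∑ j, a i j * (u j * v j) = 0 := by
    rw [Finset.sum_comm]
    simp_rw [← Finset.sum_mul]
    simp [hcol]
  have h3 : ∑ i : Fin N, ∑ j, a i j * (u j * v i)
      = ∑ i, ∑ j, a i j * (u i * v j) := by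
    rw [Finset.sum_comm]
    exact Finset.sum_congr rfl fun i _ => Finset.sum_congr rfl fun j _ => by
      rw [hsym j i]
  rw [h1, h2, h3]
  ring


private lemma quadBound' (N : ℕ) (hN0 : 0 < N) (a : Matrix (Fin N) (Fin N) ℝ)
    (hsym : ∀ i j, a i j = a j i)
    (hoff : ∀ i j, i ≠ j → 0 ≤ a i j)
    (hrow : ∀ i, ∑ j, a i j = 0)
    (lam β : ℝ) (hβ : 0 < β)
    (hspec : ∀ v : Fin N → ℝ, (∑ i, v i) = 0 → v ⬝ᵥ a.mulVec v ≤ lam * ∑ i, (v i) ^ 2)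
    (y z : Fin N → ℝ)
    (hz : ∀ i j, β * (y i - y j) ^ 2 ≤ (y i - y j) * (z i - z j)) :
    ∑ i, ∑ j, a i j * (y i * z j)
      ≤ β * lam / (2 * N) * ∑ i, ∑ j, (y i - y j) ^ 2 := by
  have hNR : (0:ℝ) < (N:ℝ) := by exact_mod_cast hN0
  -- Step A : P y z ≤ β * P y y
  have hA : ∑ i, ∑ j, a i j * (y i * z j)
      ≤ β * ∑ i, ∑ j, a i j * (y i * y j) := by
    have hpos : (0:ℝ) ≤ ∑ i, ∑ j, a i j *
        ((y i - y j) * (z i - z j) - β * ((y i - y j) * (y i - y j))) := by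
      apply Finset.sum_nonneg; intro i _
      apply Finset.sum_nonneg; intro j _
      rcases eq_or_ne i j with rfl | hij
      · simp
      · apply mul_nonneg (hoff i j hij)
        have := hz i j
        nlinarith [hz i j]
    have e1 := quadId' N a hsym hrow y z
    have e2 := quadId' N a hsym hrow y y
    have hsplit : ∑ i, ∑ j, a i j *
        ((y i - y j) * (z i - z j) - β * ((y i - y j) * (y i - y j)))
        = (∑ i, ∑ j, a i j * ((y i - y j) * (z i - z j)))
          - β * ∑ i, ∑ j, a i j * ((y i - y j) * (y i - y j)) := by
      simp_rw [Finset.mul_sum, ← Finset.sum_sub_distrib]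
      exact Finset.sum_congr rfl fun i _ => Finset.sum_congr rfl fun j _ => by ring
    rw [hsplit, e1, e2] at hpos
    linarith
  -- Step B : P y y ≤ lam * ∑ (y i - m)^2
  set m : ℝ := (∑ i, y i) / N with hm
  have hB : ∑ i, ∑ j, a i j * (y i * y j) ≤ lam * ∑ i, (y i - m) ^ 2 := by
    have hv0 : (∑ i, (y i - m)) = 0 := by
      rw [Finset.sum_sub_distrib, Finset.sum_const, Finset.card_univ, Fintype.card_fin,
        nsmul_eq_mul, hm]
      field_simp
      ring
    have hs := hspec (fun i => y i - m) hv0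
    have hPvv : (fun i => y i - m) ⬝ᵥ a.mulVec (fun i => y i - m)
        = ∑ i, ∑ j, a i j * (y i * y j) := by
      have hcol : ∀ j, ∑ i, a i j = 0 := by
        intro j
        calc ∑ i, a i j = ∑ i, a j i := Finset.sum_congr rfl fun i _ => hsym i j
          _ = 0 := hrow j
      have hdot : (fun i => y i - m) ⬝ᵥ a.mulVec (fun i => y i - m)
          = ∑ i, ∑ j, (y i - m) * (a i j * (y j - m)) := by
        simp only [dotProduct, Matrix.mulVec, Finset.mul_sum]
      rw [hdot]
      have expand : ∀ i j : Fin N, (y i - m) * (a i j * (y j - m))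
          = a i j * (y i * y j) - m * (a i j * y i) - m * (a i j * y j)
            + m * m * a i j := by intros; ring
      simp_rw [expand, Finset.sum_add_distrib, Finset.sum_sub_distrib]
      have t1 : ∑ i : Fin N, ∑ j, m * (a i j * y i) = 0 := by
        simp_rw [← Finset.mul_sum]
        have : ∀ i : Fin N, ∑ j, a i j * y i = 0 := by
          intro i; rw [← Finset.sum_mul, hrow i, zero_mul]
        simp [this]
      have t2 : ∑ i : Fin N, ∑ j, m * (a i j * y j) = 0 := by
        rw [Finset.sum_comm]
        simp_rw [← Finset.mul_sum]
        have : ∀ j : Fin N, ∑ i, a i j * y j = 0 := by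
          intro j; rw [← Finset.sum_mul, hcol j, zero_mul]
        simp [this]
      have t3 : ∑ i : Fin N, ∑ j, m * m * a i j = 0 := by
        simp_rw [← Finset.mul_sum]
        simp [hrow]
      rw [t1, t2, t3]
      ring
    rw [hPvv] at hs
    exact hs
  -- Step C : ∑∑ (y i - y j)^2 = 2N ∑ (y i - m)^2
  have hC : ∑ i, ∑ j, (y i - y j) ^ 2 = 2 * N * ∑ i, (y i - m) ^ 2 := by
    have := pairSum' N y y
    simp_rw [← pow_two] at this
    rw [this]
    have : ∑ i, (y i - m) ^ 2
        = ∑ i, (y i)^2 - 2 * m * (∑ i, y i) + N * m ^ 2 := by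
      calc ∑ i, (y i - m) ^ 2 = ∑ i, ((y i)^2 - (2*m) * (y i) + m^2) :=
            Finset.sum_congr rfl fun i _ => by ring
        _ = ∑ i, (y i)^2 - 2 * m * (∑ i, y i) + N * m ^ 2 := by
            rw [Finset.sum_add_distrib, Finset.sum_sub_distrib, ← Finset.mul_sum,
              Finset.sum_const, Finset.card_univ, Fintype.card_fin, nsmul_eq_mul]
    rw [this, hm]
    field_simp
    ring
  -- combine
  calc ∑ i, ∑ j, a i j * (y i * z j)
      ≤ β * ∑ i, ∑ j, a i j * (y i * y j) := hA
    _ ≤ β * (lam * ∑ i, (y i - m) ^ 2) := by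
        exact mul_le_mul_of_nonneg_left hB (le_of_lt hβ)
    _ = β * lam / (2 * N) * ∑ i, ∑ j, (y i - y j) ^ 2 := by
        rw [hC]; field_simp


private lemma tripleComm (N n : ℕ) (h : Fin N → Fin N → Fin n → ℝ) :
    ∑ k, ∑ i, ∑ j, h i j k = ∑ i, ∑ j, ∑ k, h i j k := by
  rw [Finset.sum_comm]
  exact Finset.sum_congr rfl fun i _ => Finset.sum_comm

end Aux

set_option maxHeartbeats 1000000 in
theorem stmt18 (N n : ℕ) (hN : 2 ≤ N) (A : ℝ → Matrix (Fin N) (Fin N) ℝ)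
    (hsym : ∀ t : ℝ, 0 ≤ t → ∀ i j, A t i j = A t j i)
    (hoff : ∀ t : ℝ, 0 ≤ t → ∀ i j, i ≠ j → 0 ≤ A t i j)
    (hdiag : ∀ t : ℝ, 0 ≤ t → ∀ i, A t i i = -∑ j ∈ Finset.univ.erase i, A t i j)
    (hirr : ∀ t : ℝ, 0 ≤ t → ∀ S : Finset (Fin N), S.Nonempty → S ≠ Finset.univ →
      ∃ i ∈ S, ∃ j, j ∉ S ∧ A t i j ≠ 0)
    (lam : ℝ) (hlam : lam < 0)
    (hspec : ∀ t : ℝ, 0 ≤ t → ∀ v : Fin N → ℝ, (∑ i, v i) = 0 →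
      v ⬝ᵥ (A t).mulVec v ≤ lam * ∑ i, (v i) ^ 2)
    (δ : Fin n → ℝ) (ϖ : ℝ) (hϖ : 0 < ϖ)
    (f : (Fin n → ℝ) → ℝ → (Fin n → ℝ))
    (hf : Continuous fun p : (Fin n → ℝ) × ℝ => f p.1 p.2)
    (hQUAD : ∀ x y : Fin n → ℝ, ∀ t : ℝ, 0 ≤ t →
      (∑ k, (x k - y k) * (f x t k - f y t k)) - (∑ k, δ k * (x k - y k) ^ 2)
        ≤ -ϖ * ∑ k, (x k - y k) ^ 2)
    (β : ℝ) (hβ : 0 < β) (g : Fin n → ℝ → ℝ)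
    (hg : ∀ k : Fin n, ∀ u v : ℝ, u ≠ v → β ≤ (g k u - g k v) / (u - v))
    (α : ℝ) (hα : 0 < α)
    (x : Fin N → ℝ → (Fin n → ℝ)) (c : ℝ → ℝ) (hc0 : c 0 = 0)
    (hODE : ∀ i, ∀ t : ℝ, 0 ≤ t →
      HasDerivAt (x i)
        (fun k => f (x i t) t k
          + c t * ∑ j ∈ Finset.univ.erase i,
              A t i j * (g k (x j t k) - g k (x i t k))) t)
    (hcODE : ∀ t : ℝ, 0 ≤ t →
      HasDerivAt c (-(α / 2) * ∑ i, ∑ j, A t i j * ∑ k, x i t k * g k (x j t k)) t) :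
    (∀ i j, Tendsto (fun t => ‖x i t - x j t‖) atTop (nhds 0)) ∧
    ∃ c₀ : ℝ, Tendsto c atTop (nhds c₀) := by
  have hN0 : 0 < N := lt_of_lt_of_le two_pos hN
  have hNR : (0:ℝ) < (N:ℝ) := by exact_mod_cast hN0
  set D : ℝ := ∑ k, |δ k| with hD
  have hD0 : 0 ≤ D := Finset.sum_nonneg fun k _ => abs_nonneg _
  have hDk : ∀ k, δ k ≤ D := fun k =>
    le_trans (le_abs_self _)
      (Finset.single_le_sum (f := fun k => |δ k|) (fun k _ => abs_nonneg _) (Finset.mem_univ k))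
  set L : ℝ := 2 * D + 1 with hLdef
  have hL0 : 0 < L := by positivity
  have hβlam : β * lam < 0 := mul_neg_of_pos_of_neg hβ hlam
  set γ : ℝ := α * β * (-lam) / (4 * N) with hγdef
  have hγ0 : 0 < γ := by
    apply div_pos
    · exact mul_pos (mul_pos hα hβ) (by linarith)
    · positivity
  set M : ℝ := D / (β * (-lam)) with hMdef
  have hM0 : 0 ≤ M := by
    apply div_nonneg hD0
    nlinarith
  have hβlamne : β * lam ≠ 0 := ne_of_lt hβlam
  have hMl : M * (β * lam) = -D := by
    rw [hMdef]
    field_simp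
    rw [mul_div_assoc, div_self (ne_of_lt hlam)]
    ring
  set S : ℝ → ℝ := fun t => ∑ i, ∑ j, ∑ k, (x i t k - x j t k) ^ 2 with hSdef
  have hS0 : ∀ t, 0 ≤ S t := fun t =>
    Finset.sum_nonneg fun i _ => Finset.sum_nonneg fun j _ =>
      Finset.sum_nonneg fun k _ => sq_nonneg _
  -- row and column sums of A t vanish
  have hrow : ∀ t : ℝ, 0 ≤ t → ∀ i, ∑ j, A t i j = 0 := by
    intro t ht i
    rw [← Finset.add_sum_erase _ _ (Finset.mem_univ i), hdiag t ht i]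
    ring
  have hcol : ∀ t : ℝ, 0 ≤ t → ∀ j, ∑ i, A t i j = 0 := by
    intro t ht j
    calc ∑ i, A t i j = ∑ i, A t j i := Finset.sum_congr rfl fun i _ => hsym t ht i j
      _ = 0 := hrow t ht j
  -- the coupling term rewritten as a full sum
  have hcoup : ∀ t : ℝ, 0 ≤ t → ∀ i k,
      ∑ j ∈ Finset.univ.erase i, A t i j * (g k (x j t k) - g k (x i t k))
        = ∑ j, A t i j * g k (x j t k) := by
    intro t ht i k
    have h1 : ∑ j ∈ Finset.univ.erase i, A t i j * (g k (x j t k) - g k (x i t k))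
        = (∑ j ∈ Finset.univ.erase i, A t i j * g k (x j t k))
          - (∑ j ∈ Finset.univ.erase i, A t i j) * g k (x i t k) := by
      rw [Finset.sum_mul, ← Finset.sum_sub_distrib]
      exact Finset.sum_congr rfl fun j _ => by ring
    have h3 : ∑ j, A t i j * g k (x j t k)
        = A t i i * g k (x i t k) + ∑ j ∈ Finset.univ.erase i, A t i j * g k (x j t k) :=
      (Finset.add_sum_erase _ _ (Finset.mem_univ i)).symm
    rw [h1, h3, hdiag t ht i]
    ring
  -- coordinatewise derivatives
  have hx' : ∀ (i : Fin N) (k : Fin n) (t : ℝ), 0 ≤ t →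
      HasDerivAt (fun s => x i s k)
        (f (x i t) t k + c t * ∑ j, A t i j * g k (x j t k)) t := by
    intro i k t ht
    have h := hasDerivAt_pi.1 (hODE i t ht) k
    simpa [hcoup t ht i k] using h
  -- the quantities F2 (QUAD part) and PT (coupling quadratic form)
  set F2 : ℝ → ℝ := fun t => ∑ i, ∑ j, ∑ k,
      (x i t k - x j t k) * (f (x i t) t k - f (x j t) t k) with hF2def
  set PT : ℝ → ℝ := fun t => ∑ k, ∑ i, ∑ j, A t i j * (x i t k * g k (x j t k)) with hPTdef
  set Sd : ℝ → ℝ := fun t => 2 * F2 t + 4 * N * c t * PT t with hSddef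
  -- derivative of S
  have hSd : ∀ t : ℝ, 0 ≤ t → HasDerivAt S (Sd t) t := by
    intro t ht
    have hterm : ∀ (i j : Fin N) (k : Fin n),
        HasDerivAt (fun s => (x i s k - x j s k) ^ 2)
          (2 * (x i t k - x j t k) *
            ((f (x i t) t k + c t * ∑ l, A t i l * g k (x l t k))
              - (f (x j t) t k + c t * ∑ l, A t j l * g k (x l t k)))) t := by
      intro i j k
      have h := ((hx' i k t ht).sub (hx' j k t ht)).pow 2
      refine h.congr_deriv ?_
      norm_num
    have hder : HasDerivAt S
        (∑ i, ∑ j, ∑ k, 2 * (x i t k - x j t k) *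
          ((f (x i t) t k + c t * ∑ l, A t i l * g k (x l t k))
            - (f (x j t) t k + c t * ∑ l, A t j l * g k (x l t k)))) t := by
      apply HasDerivAt.fun_sum
      intro i _
      apply HasDerivAt.fun_sum
      intro j _
      exact HasDerivAt.fun_sum fun k _ => hterm i j k
    have halg : ∑ i, ∑ j, ∑ k, 2 * (x i t k - x j t k) *
          ((f (x i t) t k + c t * ∑ l, A t i l * g k (x l t k))
            - (f (x j t) t k + c t * ∑ l, A t j l * g k (x l t k))) = Sd t := by
      have split : ∑ i, ∑ j, ∑ k, 2 * (x i t k - x j t k) *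
            ((f (x i t) t k + c t * ∑ l, A t i l * g k (x l t k))
              - (f (x j t) t k + c t * ∑ l, A t j l * g k (x l t k)))
          = 2 * F2 t + 2 * c t * ∑ i, ∑ j, ∑ k, (x i t k - x j t k) *
              ((∑ l, A t i l * g k (x l t k)) - (∑ l, A t j l * g k (x l t k))) := by
        have e : ∀ (i j : Fin N) (k : Fin n),
            2 * (x i t k - x j t k) *
              ((f (x i t) t k + c t * ∑ l, A t i l * g k (x l t k))
                - (f (x j t) t k + c t * ∑ l, A t j l * g k (x l t k)))
            = 2 * ((x i t k - x j t k) * (f (x i t) t k - f (x j t) t k))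
              + 2 * c t * ((x i t k - x j t k) *
                ((∑ l, A t i l * g k (x l t k)) - (∑ l, A t j l * g k (x l t k)))) := by
          intros; ring
        calc ∑ i, ∑ j, ∑ k, 2 * (x i t k - x j t k) *
              ((f (x i t) t k + c t * ∑ l, A t i l * g k (x l t k))
                - (f (x j t) t k + c t * ∑ l, A t j l * g k (x l t k)))
            = ∑ i, ∑ j, ∑ k, (2 * ((x i t k - x j t k) * (f (x i t) t k - f (x j t) t k))
              + 2 * c t * ((x i t k - x j t k) *
                ((∑ l, A t i l * g k (x l t k)) - (∑ l, A t j l * g k (x l t k))))) :=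
              Finset.sum_congr rfl fun i _ => Finset.sum_congr rfl fun j _ =>
                Finset.sum_congr rfl fun k _ => e i j k
          _ = 2 * F2 t + 2 * c t * ∑ i, ∑ j, ∑ k, (x i t k - x j t k) *
                ((∑ l, A t i l * g k (x l t k)) - (∑ l, A t j l * g k (x l t k))) := by
              simp only [Finset.sum_add_distrib, ← Finset.mul_sum, hF2def]
      rw [split]
      have hT : ∑ i, ∑ j, ∑ k, (x i t k - x j t k) *
            ((∑ l, A t i l * g k (x l t k)) - (∑ l, A t j l * g k (x l t k)))
          = 2 * N * PT t := by
        rw [← tripleComm N n (fun i j k => (x i t k - x j t k) *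
          ((∑ l, A t i l * g k (x l t k)) - (∑ l, A t j l * g k (x l t k))))]
        rw [hPTdef, Finset.mul_sum]
        refine Finset.sum_congr rfl fun k _ => ?_
        have hps := pairSum' N (fun i => x i t k) (fun i => ∑ l, A t i l * g k (x l t k))
        rw [hps]
        have hCsum : ∑ i, ∑ l, A t i l * g k (x l t k) = 0 := by
          rw [Finset.sum_comm]
          have : ∀ l, ∑ i, A t i l * g k (x l t k) = 0 := fun l => by
            rw [← Finset.sum_mul, hcol t ht l, zero_mul]
          simp [this]
        have hyC : ∑ i, x i t k * ∑ l, A t i l * g k (x l t k)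
            = ∑ i, ∑ l, A t i l * (x i t k * g k (x l t k)) := by
          refine Finset.sum_congr rfl fun i _ => ?_
          rw [Finset.mul_sum]
          exact Finset.sum_congr rfl fun l _ => by ring
        rw [hCsum, hyC]
        ring
      rw [hT, hSddef]
      ring
    rwa [halg] at hder
  -- bound on F2
  have hF2le : ∀ t : ℝ, 0 ≤ t → F2 t ≤ (D - ϖ) * S t := by
    intro t ht
    have hPer : ∀ i j : Fin N, ∑ k, (x i t k - x j t k) * (f (x i t) t k - f (x j t) t k)
        ≤ (D - ϖ) * ∑ k, (x i t k - x j t k) ^ 2 := by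
      intro i j
      have hq := hQUAD (x i t) (x j t) t ht
      have hd : ∑ k, δ k * (x i t k - x j t k) ^ 2
          ≤ D * ∑ k, (x i t k - x j t k) ^ 2 := by
        rw [Finset.mul_sum]
        exact Finset.sum_le_sum fun k _ => mul_le_mul_of_nonneg_right (hDk k) (sq_nonneg _)
      have e : (D - ϖ) * ∑ k, (x i t k - x j t k) ^ 2
          = D * (∑ k, (x i t k - x j t k) ^ 2) - ϖ * ∑ k, (x i t k - x j t k) ^ 2 := by ring
      have e2 : -ϖ * ∑ k, (x i t k - x j t k) ^ 2
          = -(ϖ * ∑ k, (x i t k - x j t k) ^ 2) := by ring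
      rw [e]
      rw [e2] at hq
      linarith
    have hrw : (D - ϖ) * S t
        = ∑ i, ∑ j, (D - ϖ) * ∑ k, (x i t k - x j t k) ^ 2 := by
      simp only [hSdef]
      rw [Finset.mul_sum]
      exact Finset.sum_congr rfl fun i _ => Finset.mul_sum _ _ _
    rw [hrw, hF2def]
    exact Finset.sum_le_sum fun i _ => Finset.sum_le_sum fun j _ => hPer i j
  -- bound on PT
  have hPTle : ∀ t : ℝ, 0 ≤ t → PT t ≤ β * lam / (2 * N) * S t := by
    intro t ht
    have hper : ∀ k : Fin n, ∑ i, ∑ j, A t i j * (x i t k * g k (x j t k))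
        ≤ β * lam / (2 * N) * ∑ i, ∑ j, (x i t k - x j t k) ^ 2 := by
      intro k
      apply quadBound' N hN0 (A t) (hsym t ht) (hoff t ht) (hrow t ht) lam β hβ (hspec t ht)
      intro i j
      rcases eq_or_ne (x i t k) (x j t k) with he | hne
      · rw [he]; simp
      · have h := hg k (x i t k) (x j t k) hne
        have h2 : (x i t k - x j t k) ≠ 0 := sub_ne_zero.2 hne
        have h3 := mul_le_mul_of_nonneg_right h (sq_nonneg (x i t k - x j t k))
        calc β * (x i t k - x j t k) ^ 2
            ≤ (g k (x i t k) - g k (x j t k)) / (x i t k - x j t k)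
              * (x i t k - x j t k) ^ 2 := h3
          _ = (x i t k - x j t k) * (g k (x i t k) - g k (x j t k)) := by
              field_simp
    calc PT t ≤ ∑ k, β * lam / (2 * N) * ∑ i, ∑ j, (x i t k - x j t k) ^ 2 :=
          Finset.sum_le_sum fun k _ => hper k
      _ = β * lam / (2 * N) * S t := by
          rw [← Finset.mul_sum]
          congr 1
          simp only [hSdef]
          exact tripleComm N n _
  have hPT0 : ∀ t : ℝ, 0 ≤ t → PT t ≤ 0 := by
    intro t ht
    refine le_trans (hPTle t ht) ?_
    apply mul_nonpos_of_nonpos_of_nonneg _ (hS0 t)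
    apply div_nonpos_of_nonpos_of_nonneg (le_of_lt hβlam)
    positivity
  -- derivative of c
  have hc' : ∀ t : ℝ, 0 ≤ t → HasDerivAt c (-(α / 2) * PT t) t := by
    intro t ht
    have h := hcODE t ht
    have e : ∑ i, ∑ j, A t i j * ∑ k, x i t k * g k (x j t k) = PT t := by
      simp only [hPTdef]
      rw [tripleComm N n (fun i j k => A t i j * (x i t k * g k (x j t k)))]
      exact Finset.sum_congr rfl fun i _ => Finset.sum_congr rfl fun j _ =>
        (Finset.mul_sum _ _ _)
    rwa [e] at h
  have hcd_ge : ∀ t : ℝ, 0 ≤ t → γ * S t ≤ -(α / 2) * PT t := by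
    intro t ht
    have h := mul_le_mul_of_nonpos_left (hPTle t ht) (by linarith : -(α / 2) ≤ 0)
    have e : -(α / 2) * (β * lam / (2 * N) * S t) = γ * S t := by
      rw [hγdef]
      field_simp
      ring
    linarith [e ▸ h]
  have hcd_nonneg : ∀ t : ℝ, 0 ≤ t → 0 ≤ -(α / 2) * PT t := by
    intro t ht
    have := hcd_ge t ht
    nlinarith [hS0 t, hγ0.le]
  -- c is monotone on [0, ∞)
  have hccont : ContinuousOn c (Set.Ici 0) := fun t ht =>
    ((hc' t ht).continuousAt).continuousWithinAt
  have hcmono : MonotoneOn c (Set.Ici 0) := by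
    apply monotoneOn_of_deriv_nonneg (convex_Ici 0) hccont
    · intro t ht
      rw [interior_Ici] at ht
      exact ((hc' t (le_of_lt ht)).differentiableAt).differentiableWithinAt
    · intro t ht
      rw [interior_Ici] at ht
      rw [(hc' t (le_of_lt ht)).deriv]
      exact hcd_nonneg t (le_of_lt ht)
  have hcnn : ∀ t : ℝ, 0 ≤ t → 0 ≤ c t := by
    intro t ht
    have := hcmono (Set.self_mem_Ici) ht ht
    rwa [hc0] at this
  -- Sd ≤ L * S
  have hSdle : ∀ t : ℝ, 0 ≤ t → Sd t ≤ L * S t := by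
    intro t ht
    have h1 : 4 * (N:ℝ) * c t * PT t ≤ 0 := by
      apply mul_nonpos_of_nonneg_of_nonpos _ (hPT0 t ht)
      have := hcnn t ht
      positivity
    have h2 : 2 * F2 t ≤ 2 * (D - ϖ) * S t := by
      have := hF2le t ht
      nlinarith
    have h3 : 2 * (D - ϖ) * S t ≤ L * S t := by
      apply mul_le_mul_of_nonneg_right _ (hS0 t)
      rw [hLdef]; linarith
    calc Sd t = 2 * F2 t + 4 * N * c t * PT t := rfl
      _ ≤ 2 * (D - ϖ) * S t + 0 := by linarith
      _ ≤ L * S t := by linarith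
  -- the Lyapunov function V
  set V : ℝ → ℝ := fun t => S t / (4 * N) + (1 / α) * (c t - M) ^ 2 with hVdef
  have hV' : ∀ t : ℝ, 0 ≤ t →
      HasDerivAt V (Sd t / (4 * N) + (1 / α) * (2 * (c t - M) * (-(α / 2) * PT t))) t := by
    intro t ht
    have h1 : HasDerivAt (fun s => S s / (4 * N)) (Sd t / (4 * N)) t :=
      (hSd t ht).div_const _
    have h2 : HasDerivAt (fun s => (1 / α) * (c s - M) ^ 2)
        ((1 / α) * (2 * (c t - M) * (-(α / 2) * PT t))) t := by
      have h3 := ((hc' t ht).sub_const M).pow 2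
      have h4 := h3.const_mul (1 / α)
      refine h4.congr_deriv ?_
      norm_num
    exact h1.add h2
  have hVd_nonpos : ∀ t : ℝ, 0 ≤ t →
      Sd t / (4 * N) + (1 / α) * (2 * (c t - M) * (-(α / 2) * PT t)) ≤ 0 := by
    intro t ht
    have e1 : (1 / α) * (2 * (c t - M) * (-(α / 2) * PT t)) = -((c t - M) * PT t) := by
      field_simp
    have e2 : Sd t / (4 * N) = F2 t / (2 * N) + c t * PT t := by
      rw [hSddef]
      field_simp
      ring
    rw [e1, e2]
    have h1 : F2 t / (2 * (N:ℝ)) ≤ (D - ϖ) * S t / (2 * N) :=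
      div_le_div_of_nonneg_right (hF2le t ht) (by positivity)
    have h2 : M * PT t ≤ M * (β * lam / (2 * N) * S t) :=
      mul_le_mul_of_nonneg_left (hPTle t ht) hM0
    have e3 : M * (β * lam / (2 * N) * S t) = -D * S t / (2 * N) := by
      calc M * (β * lam / (2 * N) * S t) = (M * (β * lam)) * (S t / (2 * N)) := by ring
        _ = -D * S t / (2 * N) := by rw [hMl]; ring
    have h4 : -ϖ * S t / (2 * N) ≤ 0 := by
      apply div_nonpos_of_nonpos_of_nonneg _ (by positivity)
      nlinarith [hS0 t]
    have e4 : c t * PT t + -((c t - M) * PT t) = M * PT t := by ring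
    have e5 : (D - ϖ) * S t / (2 * N) + -D * S t / (2 * N) = -ϖ * S t / (2 * N) := by ring
    linarith
  -- V is antitone on [0,∞)
  have hVanti : AntitoneOn V (Set.Ici 0) := by
    apply antitoneOn_of_deriv_nonpos (convex_Ici 0)
      (fun t ht => ((hV' t ht).continuousAt).continuousWithinAt)
    · intro t ht; rw [interior_Ici] at ht
      exact ((hV' t ht.le).differentiableAt).differentiableWithinAt
    · intro t ht; rw [interior_Ici] at ht
      rw [(hV' t ht.le).deriv]
      exact hVd_nonpos t ht.le
  -- c is bounded above
  set B : ℝ := M + Real.sqrt (α * V 0) with hBdef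
  have hcub : ∀ t : ℝ, 0 ≤ t → c t ≤ B := by
    intro t ht
    have h1 : V t ≤ V 0 := hVanti Set.self_mem_Ici ht ht
    have h2 : (1 / α) * (c t - M) ^ 2 ≤ V t := by
      have hVt : V t = S t / (4 * N) + (1 / α) * (c t - M) ^ 2 := rfl
      have hSnn : 0 ≤ S t / (4 * (N:ℝ)) := div_nonneg (hS0 t) (by positivity)
      linarith
    have h3 : (c t - M) ^ 2 ≤ α * V 0 := by
      have h5 := le_trans h2 h1
      calc (c t - M) ^ 2 = α * ((1 / α) * (c t - M) ^ 2) := by field_simp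
        _ ≤ α * V 0 := mul_le_mul_of_nonneg_left h5 hα.le
    have h4 : c t - M ≤ Real.sqrt (α * V 0) := by
      calc c t - M ≤ |c t - M| := le_abs_self _
        _ = Real.sqrt ((c t - M) ^ 2) := (Real.sqrt_sq_eq_abs _).symm
        _ ≤ Real.sqrt (α * V 0) := Real.sqrt_le_sqrt h3
    rw [hBdef]
    linarith
  -- convergence of c
  have hcmax_mono : Monotone (fun t : ℝ => c (max t 0)) := by
    intro s t hst
    exact hcmono (Set.mem_Ici.2 (le_max_right s 0)) (Set.mem_Ici.2 (le_max_right t 0))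
      (max_le_max hst le_rfl)
  have hcmax_bdd : BddAbove (Set.range (fun t : ℝ => c (max t 0))) := by
    refine ⟨B, ?_⟩
    rintro y ⟨t, rfl⟩
    exact hcub _ (le_max_right t 0)
  have hctend0 : Tendsto (fun t : ℝ => c (max t 0)) atTop (nhds (⨆ t : ℝ, c (max t 0))) :=
    tendsto_atTop_ciSup hcmax_mono hcmax_bdd
  have hceq : (fun t : ℝ => c (max t 0)) =ᶠ[atTop] c := by
    filter_upwards [eventually_ge_atTop (0:ℝ)] with t ht
    rw [max_eq_left ht]
  have hctend : Tendsto c atTop (nhds (⨆ t : ℝ, c (max t 0))) := hctend0.congr' hceq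
  set c₀ : ℝ := ⨆ t : ℝ, c (max t 0) with hc₀def
  -- φ = S·exp(-Lt) is antitone on [0,∞)
  set φ : ℝ → ℝ := fun t => S t * Real.exp (-(L * t)) with hφdef
  have hφ' : ∀ t : ℝ, 0 ≤ t → HasDerivAt φ
      (Sd t * Real.exp (-(L * t)) + S t * (Real.exp (-(L * t)) * (-L))) t := by
    intro t ht
    have h1 : HasDerivAt (fun s : ℝ => -(L * s)) (-L) t := by
      exact (((hasDerivAt_id t).const_mul L).neg).congr_deriv (by ring)
    have h2 : HasDerivAt (fun s : ℝ => Real.exp (-(L * s)))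
        (Real.exp (-(L * t)) * (-L)) t := h1.exp
    exact (hSd t ht).mul h2
  have hφd : ∀ t : ℝ, 0 ≤ t →
      Sd t * Real.exp (-(L * t)) + S t * (Real.exp (-(L * t)) * (-L)) ≤ 0 := by
    intro t ht
    have h := hSdle t ht
    have hexp : 0 < Real.exp (-(L * t)) := Real.exp_pos _
    have h2 : Sd t * Real.exp (-(L * t)) ≤ L * S t * Real.exp (-(L * t)) :=
      mul_le_mul_of_nonneg_right h hexp.le
    have e : S t * (Real.exp (-(L * t)) * (-L)) = -(L * S t * Real.exp (-(L * t))) := by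
      ring
    linarith
  have hφanti : AntitoneOn φ (Set.Ici 0) := by
    apply antitoneOn_of_deriv_nonpos (convex_Ici 0)
      (fun t ht => ((hφ' t ht).continuousAt).continuousWithinAt)
    · intro t ht; rw [interior_Ici] at ht
      exact ((hφ' t ht.le).differentiableAt).differentiableWithinAt
    · intro t ht; rw [interior_Ici] at ht
      rw [(hφ' t ht.le).deriv]
      exact hφd t ht.le
  -- lower bound for S on [s, s+1]
  have hSlow : ∀ s : ℝ, 0 ≤ s → ∀ t : ℝ, s ≤ t → t ≤ s + 1 →
      Real.exp (-L) * S (s + 1) ≤ S t := by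
    intro s hs t hst hts
    have ht0 : 0 ≤ t := le_trans hs hst
    have hφle : S (s + 1) * Real.exp (-(L * (s + 1))) ≤ S t * Real.exp (-(L * t)) :=
      hφanti (Set.mem_Ici.2 ht0) (Set.mem_Ici.2 (by linarith)) hts
    calc Real.exp (-L) * S (s + 1) ≤ Real.exp (L * t - L * (s + 1)) * S (s + 1) := by
          apply mul_le_mul_of_nonneg_right _ (hS0 _)
          apply Real.exp_le_exp.2
          nlinarith [hL0]
      _ = (S (s + 1) * Real.exp (-(L * (s + 1)))) * Real.exp (L * t) := by
          rw [mul_assoc, ← Real.exp_add]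
          rw [show -(L * (s + 1)) + L * t = L * t - L * (s + 1) by ring]
          ring
      _ ≤ (S t * Real.exp (-(L * t))) * Real.exp (L * t) :=
          mul_le_mul_of_nonneg_right hφle (Real.exp_pos _).le
      _ = S t := by
          rw [mul_assoc, ← Real.exp_add]
          simp
  -- increments of c dominate S (s+1)
  have hkey : ∀ s : ℝ, 0 ≤ s → γ * Real.exp (-L) * S (s + 1) ≤ c (s + 1) - c s := by
    intro s hs
    set K : ℝ := γ * Real.exp (-L) * S (s + 1) with hKdef
    have hKd : ∀ u : ℝ, HasDerivAt (fun y : ℝ => K * y) K u := by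
      intro u
      simpa using (hasDerivAt_id u).const_mul K
    have hmono : MonotoneOn (fun u => c u - K * u) (Set.Icc s (s + 1)) := by
      apply monotoneOn_of_deriv_nonneg (convex_Icc _ _)
      · intro u hu
        have hu0 : 0 ≤ u := le_trans hs hu.1
        exact (((hc' u hu0).sub (hKd u)).continuousAt).continuousWithinAt
      · intro u hu
        rw [interior_Icc] at hu
        have hu0 : 0 ≤ u := le_trans hs hu.1.le
        exact (((hc' u hu0).sub (hKd u)).differentiableAt).differentiableWithinAt
      · intro u hu
        rw [interior_Icc] at hu
        have hu0 : 0 ≤ u := le_trans hs hu.1.le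
        rw [((hc' u hu0).fun_sub (hKd u)).deriv]
        have h1 := hcd_ge u hu0
        have h2 := hSlow s hs u hu.1.le hu.2.le
        have h3 : γ * (Real.exp (-L) * S (s + 1)) ≤ γ * S u :=
          mul_le_mul_of_nonneg_left h2 hγ0.le
        have e1 : K = γ * (Real.exp (-L) * S (s + 1)) := by rw [hKdef]; ring
        linarith
    have h := hmono (Set.mem_Icc.2 ⟨le_rfl, by linarith⟩)
      (Set.mem_Icc.2 ⟨by linarith, le_rfl⟩) (by linarith)
    simp only at h
    have e : K * (s + 1) = K * s + K := by ring
    linarith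
  -- S (s + 1) → 0
  have hc1tend : Tendsto (fun s : ℝ => c (s + 1)) atTop (nhds c₀) :=
    hctend.comp (tendsto_atTop_add_const_right atTop 1 tendsto_id)
  have hdiff : Tendsto (fun s : ℝ => (γ * Real.exp (-L))⁻¹ * (c (s + 1) - c s))
      atTop (nhds 0) := by
    have h := hc1tend.sub hctend
    rw [sub_self] at h
    have h2 := h.const_mul ((γ * Real.exp (-L))⁻¹)
    simpa using h2
  have hpos : 0 < γ * Real.exp (-L) := mul_pos hγ0 (Real.exp_pos _)
  have hStail : Tendsto (fun s : ℝ => S (s + 1)) atTop (nhds 0) := by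
    apply squeeze_zero' (Eventually.of_forall fun s => hS0 _) _ hdiff
    filter_upwards [eventually_ge_atTop (0:ℝ)] with s hs
    have h := hkey s hs
    calc S (s + 1) = (γ * Real.exp (-L))⁻¹ * (γ * Real.exp (-L) * S (s + 1)) := by
          field_simp
      _ ≤ (γ * Real.exp (-L))⁻¹ * (c (s + 1) - c s) :=
          mul_le_mul_of_nonneg_left h (inv_nonneg.2 hpos.le)
  have hStend : Tendsto S atTop (nhds 0) := by
    have hcomp : Tendsto (fun u : ℝ => S (u + -1 + 1)) atTop (nhds 0) :=
      hStail.comp (tendsto_atTop_add_const_right atTop (-1) tendsto_id)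
    exact Tendsto.congr (fun u => congrArg S (by ring : u + -1 + 1 = u)) hcomp
  refine ⟨?_, ⟨c₀, hctend⟩⟩
  intro i j
  have hb : ∀ t : ℝ, ‖x i t - x j t‖ ≤ Real.sqrt (S t) := by
    intro t
    rw [pi_norm_le_iff_of_nonneg (Real.sqrt_nonneg _)]
    intro k
    have h1 : (x i t k - x j t k) ^ 2 ≤ S t := by
      have hin : ∑ j', ∑ k', (x i t k' - x j' t k') ^ 2 ≤ S t :=
        Finset.single_le_sum (f := fun i' => ∑ j', ∑ k', (x i' t k' - x j' t k') ^ 2)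
          (fun _ _ => by positivity) (Finset.mem_univ i)
      have hin2 : ∑ k', (x i t k' - x j t k') ^ 2
          ≤ ∑ j', ∑ k', (x i t k' - x j' t k') ^ 2 :=
        Finset.single_le_sum (f := fun j' => ∑ k', (x i t k' - x j' t k') ^ 2)
          (fun _ _ => by positivity) (Finset.mem_univ j)
      have hin3 : (x i t k - x j t k) ^ 2 ≤ ∑ k', (x i t k' - x j t k') ^ 2 :=
        Finset.single_le_sum (f := fun k' => (x i t k' - x j t k') ^ 2)
          (fun _ _ => sq_nonneg _) (Finset.mem_univ k)
      linarith
    calc ‖(x i t - x j t) k‖ = |x i t k - x j t k| := by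
          simp [Real.norm_eq_abs]
      _ = Real.sqrt ((x i t k - x j t k) ^ 2) := (Real.sqrt_sq_eq_abs _).symm
      _ ≤ Real.sqrt (S t) := Real.sqrt_le_sqrt h1
  have hsq : Tendsto (fun t => Real.sqrt (S t)) atTop (nhds 0) := by
    have h := (Real.continuous_sqrt.tendsto 0).comp hStend
    rw [Real.sqrt_zero] at h; exact h
  exact squeeze_zero (fun t => norm_nonneg _) hb hsq
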